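/- arXiv:1807.00406 — 3 statements merged into one kernel-verified Lean document; each statement's English description precedes it below -/
import Mathlib

section
/- The natural density of squarefree numbers is 6/π²: the quantity (#{n : 1 ≤ n ≤ N and n is squarefree})/N tends to 6/π² as N → ∞. -/
open Filter Real ArithmeticFunction Finset
open scoped ArithmeticFunction.Moebius

lemma summable_inv_sq : Summable (fun d : ℕ => 1 / (d:ℝ)^2) :=
  Real.summable_one_div_nat_pow.mpr one_lt_two

lemma summable_mu : Summable (fun d : ℕ => (μ d : ℝ) / (d:ℝ)^2) := by
  apply Summable.of_norm
  apply Summable.of_nonneg_of_le (fun d => norm_nonneg _) (fun d => ?_) summable_inv_sq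
  rw [norm_div, norm_pow, Real.norm_natCast]
  rcases eq_or_ne d 0 with rfl | hd
  · simp
  · apply div_le_div_of_nonneg_right ?_ (by positivity) |>.trans_eq rfl
    · have : |μ d| ≤ 1 := abs_moebius_le_one
      calc ‖(μ d : ℝ)‖ = |(μ d : ℝ)| := rfl
        _ = ((|μ d| : ℤ) : ℝ) := by push_cast; ring
        _ ≤ 1 := by exact_mod_cast this

lemma tsum_mu : ∑' d : ℕ, (μ d : ℝ) / (d:ℝ)^2 = 6 / π ^ 2 := by
  have hs : (1:ℝ) < (2:ℂ).re := by norm_num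
  have hπ : ((π:ℂ)) ≠ 0 := by
    simp [Complex.ofReal_ne_zero, Real.pi_ne_zero]
  have h1 : LSeries (fun n => (μ n : ℂ)) 2 = 6 / (π:ℂ)^2 := by
    have := LSeries_one_mul_Lseries_moebius (s := 2) hs
    rw [LSeries_one_eq_riemannZeta hs, riemannZeta_two] at this
    field_simp at this ⊢
    linear_combination this
  have h2 : LSeries (fun n => (μ n : ℂ)) 2
      = ∑' d : ℕ, ((((μ d : ℝ) / (d:ℝ)^2 : ℝ)) : ℂ) := by
    unfold LSeries
    congr 1; funext n
    rcases eq_or_ne n 0 with rfl | hn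
    · simp [LSeries.term_zero]
    · rw [LSeries.term_of_ne_zero hn]
      push_cast
      norm_num
  rw [← Complex.ofReal_tsum] at h2
  have : ((∑' d : ℕ, (μ d : ℝ) / (d:ℝ)^2 : ℝ) : ℂ) = ((6 / π^2 : ℝ) : ℂ) := by
    rw [← h2, h1]
    push_cast
    ring
  exact_mod_cast this

lemma sum_div_moebius (b : ℕ) (hb : b ≠ 0) :
    ∑ d ∈ b.divisors, μ d = if b = 1 then 1 else 0 := by
  have := congrArg (fun f : ArithmeticFunction ℤ => f b)
    (coe_moebius_mul_coe_zeta (R := ℤ))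
  simp only [coe_mul_zeta_apply, intCoe_apply, one_apply] at this
  simpa using this

lemma dvd_of_sq_dvd {a b d : ℕ} (ha : Squarefree a) (hb : b ≠ 0) (ha0 : a ≠ 0)
    (h : d ^ 2 ∣ b ^ 2 * a) : d ∣ b := by
  have hd : d ≠ 0 := by
    rintro rfl
    have h0 : b ^ 2 * a = 0 := Nat.eq_zero_of_zero_dvd (by simpa using h)
    rcases Nat.mul_eq_zero.mp h0 with h'|h'
    · exact hb (pow_eq_zero_iff two_ne_zero |>.mp h')
    · exact ha0 h'
  rw [← Nat.factorization_le_iff_dvd hd hb]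
  rw [← Nat.factorization_le_iff_dvd (by positivity) (by positivity)] at h
  intro p
  have h1 := h p
  rw [Nat.factorization_mul (by positivity) ha0, Nat.factorization_pow, Nat.factorization_pow] at h1
  have h2 : a.factorization p ≤ 1 := (Nat.squarefree_iff_factorization_le_one ha0).mp ha p
  simp only [Finsupp.coe_add, Finsupp.coe_smul, Pi.add_apply, Pi.smul_apply, smul_eq_mul] at h1
  omega

lemma filter_sq_dvd (n : ℕ) (hn : n ≠ 0) :
    ∑ d ∈ (Finset.Icc 1 n).filter (fun d => d ^ 2 ∣ n), μ d
      = if Squarefree n then 1 else 0 := by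
  obtain ⟨a, b, hab, ha⟩ := Nat.sq_mul_squarefree n
  have hb : b ≠ 0 := by rintro rfl; simp at hab; omega
  have ha0 : a ≠ 0 := by rintro rfl; simp at hab; omega
  have hset : (Finset.Icc 1 n).filter (fun d => d ^ 2 ∣ n) = b.divisors := by
    ext d
    simp only [Finset.mem_filter, Finset.mem_Icc, Nat.mem_divisors]
    constructor
    · rintro ⟨⟨h1, h2⟩, h3⟩
      refine ⟨dvd_of_sq_dvd ha hb ha0 (hab ▸ h3), hb⟩
    · rintro ⟨h1, -⟩
      have hd : d ≠ 0 := fun h => by subst h; exact hb (Nat.eq_zero_of_zero_dvd h1)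
      have hdvd : d ^ 2 ∣ n := hab ▸ Dvd.dvd.mul_right (pow_dvd_pow_of_dvd h1 2) a
      exact ⟨⟨Nat.one_le_iff_ne_zero.mpr hd,
        le_trans (Nat.le_of_dvd (by positivity) (dvd_pow_self d two_ne_zero))
          (Nat.le_of_dvd (Nat.pos_of_ne_zero hn) hdvd)⟩, hdvd⟩
  rw [hset, sum_div_moebius b hb]
  congr 1
  rw [eq_iff_iff]
  constructor
  · rintro rfl; rw [← hab]; simpa using ha
  · intro hsq
    by_contra hb1
    have : b ^ 2 ∣ n := hab ▸ Dvd.intro a rfl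
    have := hsq b (dvd_trans (by ring_nf; exact dvd_refl _) this)
    exact hb1 (Nat.isUnit_iff.mp this)

lemma count_squarefree (N : ℕ) :
    (((Finset.Icc 1 N).filter (fun n => Squarefree n)).card : ℤ)
      = ∑ d ∈ Finset.Icc 1 N, μ d * ((N / d ^ 2 : ℕ) : ℤ) := by
  have step1 : (((Finset.Icc 1 N).filter (fun n => Squarefree n)).card : ℤ)
      = ∑ n ∈ Finset.Icc 1 N, if Squarefree n then (1:ℤ) else 0 := by
    rw [Finset.card_filter]; push_cast; rfl
  rw [step1]
  have step2 : ∀ n ∈ Finset.Icc 1 N, (if Squarefree n then (1:ℤ) else 0)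
      = ∑ d ∈ Finset.Icc 1 N, if d ^ 2 ∣ n then μ d else 0 := by
    intro n hn
    rw [Finset.mem_Icc] at hn
    rw [← Finset.sum_filter, ← filter_sq_dvd n (by omega)]
    congr 1
    ext d
    simp only [Finset.mem_filter, Finset.mem_Icc]
    have key : d ^ 2 ∣ n → d ≤ n := fun h3 =>
      le_trans (Nat.le_of_dvd (Nat.pos_of_ne_zero (by
        intro h0
        rw [h0] at h3
        exact absurd (Nat.eq_zero_of_zero_dvd h3) (by omega)))
        (dvd_pow_self d two_ne_zero)) (Nat.le_of_dvd (by omega) h3)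
    constructor
    · rintro ⟨⟨h1, h2⟩, h3⟩
      exact ⟨⟨h1, le_trans h2 hn.2⟩, h3⟩
    · rintro ⟨⟨h1, h2⟩, h3⟩
      exact ⟨⟨h1, key h3⟩, h3⟩
  rw [Finset.sum_congr rfl step2, Finset.sum_comm]
  apply Finset.sum_congr rfl
  intro d _
  rw [← Finset.sum_filter, Finset.sum_const]
  have hIcc : Finset.Icc 1 N = Finset.Ioc 0 N := by
    rw [← Finset.Icc_add_one_left_eq_Ioc, zero_add]
  rw [hIcc, Nat.Ioc_filter_dvd_card_eq_div]
  simp [mul_comm]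

lemma floor_div_err {N d : ℕ} (hN : 0 < N) (hd : 0 < d) :
    |((N / d^2 : ℕ) : ℝ)/(N:ℝ) - 1/(d:ℝ)^2| ≤ 1/(N:ℝ) := by
  have hD : (0:ℝ) < (d:ℝ)^2 := by positivity
  have hNr : (0:ℝ) < (N:ℝ) := by exact_mod_cast hN
  have h1 : ((N / d^2 : ℕ) : ℝ) * (d:ℝ)^2 ≤ N := by
    have := Nat.div_mul_le_self N (d^2)
    exact_mod_cast this
  have h2 : (N:ℝ) < (((N / d^2 : ℕ) : ℝ) + 1) * (d:ℝ)^2 := by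
    have h := (Nat.div_lt_iff_lt_mul (by positivity : 0 < d^2)).mp
      (Nat.lt_succ_self (N / d^2))
    exact_mod_cast h
  rw [abs_le]
  constructor
  · rw [neg_le, ← sub_nonneg]
    have : 1/(d:ℝ)^2 - ((N / d^2 : ℕ) : ℝ)/(N:ℝ) ≤ 1/(N:ℝ) := by
      rw [div_sub_div _ _ (ne_of_gt hD) (ne_of_gt hNr), div_le_div_iff₀ (by positivity) hNr]
      nlinarith
    linarith
  · have : ((N / d^2 : ℕ) : ℝ)/N ≤ 1/(d:ℝ)^2 := by
      rw [div_le_div_iff₀ hNr hD]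
      nlinarith
    have h3 : (0:ℝ) ≤ 1/(N:ℝ) := by positivity
    linarith

lemma abs_mu_le (d : ℕ) : |(μ d : ℝ)| ≤ 1 := by
  have : |μ d| ≤ 1 := abs_moebius_le_one
  calc |(μ d : ℝ)| = ((|μ d| : ℤ) : ℝ) := by push_cast; ring
    _ ≤ 1 := by exact_mod_cast this

lemma err_bound (N : ℕ) (hN : 1 ≤ N) :
    |∑ d ∈ Finset.Icc 1 N, ((μ d : ℝ) * ((N / d^2 : ℕ) : ℝ)/(N:ℝ) - (μ d : ℝ)/(d:ℝ)^2)|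
      ≤ (Nat.sqrt N : ℝ)/(N:ℝ)
        + ∑' k : ℕ, 1/(((k + (Nat.sqrt N + 1) : ℕ)):ℝ)^2 := by
  set s := Nat.sqrt N with hs
  have hsN : s ≤ N := Nat.sqrt_le_self N
  have hIcc : Finset.Icc 1 N = Finset.Ioc 0 N := by rw [← Finset.Icc_add_one_left_eq_Ioc, zero_add]
  rw [hIcc]
  calc |∑ d ∈ Finset.Ioc 0 N, ((μ d : ℝ) * ((N / d^2 : ℕ) : ℝ)/(N:ℝ) - (μ d : ℝ)/(d:ℝ)^2)|
      ≤ ∑ d ∈ Finset.Ioc 0 N, |((μ d : ℝ) * ((N / d^2 : ℕ) : ℝ)/(N:ℝ) - (μ d : ℝ)/(d:ℝ)^2)| :=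
        Finset.abs_sum_le_sum_abs _ _
    _ = ∑ d ∈ Finset.Ioc 0 s, |((μ d : ℝ) * ((N / d^2 : ℕ) : ℝ)/(N:ℝ) - (μ d : ℝ)/(d:ℝ)^2)|
        + ∑ d ∈ Finset.Ioc s N, |((μ d : ℝ) * ((N / d^2 : ℕ) : ℝ)/(N:ℝ) - (μ d : ℝ)/(d:ℝ)^2)| :=
        (Finset.sum_Ioc_consecutive _ (Nat.zero_le s) hsN).symm
    _ ≤ ∑ d ∈ Finset.Ioc 0 s, 1/(N:ℝ) + ∑ d ∈ Finset.Ioc s N, 1/(d:ℝ)^2 := by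
        apply add_le_add
        · apply Finset.sum_le_sum
          intro d hd
          rw [Finset.mem_Ioc] at hd
          have hd0 : 0 < d := hd.1
          calc |((μ d : ℝ) * ((N / d^2 : ℕ) : ℝ)/(N:ℝ) - (μ d : ℝ)/(d:ℝ)^2)|
              = |(μ d : ℝ)| * |((N / d^2 : ℕ) : ℝ)/(N:ℝ) - 1/(d:ℝ)^2| := by
                rw [← abs_mul]; congr 1; ring
            _ ≤ 1 * (1/(N:ℝ)) :=
                mul_le_mul (abs_mu_le d) (floor_div_err (by omega) hd0) (abs_nonneg _)
                  zero_le_one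
            _ = 1/(N:ℝ) := one_mul _
        · apply Finset.sum_le_sum
          intro d hd
          rw [Finset.mem_Ioc] at hd
          have hd2 : N < d^2 := by
            have := Nat.sqrt_lt'.mp (by omega : Nat.sqrt N < d)
            nlinarith [this]
          rw [Nat.div_eq_of_lt hd2]
          simp only [Nat.cast_zero, mul_zero, zero_div, zero_sub, abs_neg]
          rw [abs_div, abs_pow, Nat.abs_cast]
          apply div_le_div_of_nonneg_right (abs_mu_le d) (by positivity) |>.trans_eq rfl
    _ ≤ (Nat.sqrt N : ℝ)/(N:ℝ) + ∑' k : ℕ, 1/(((k + (s + 1) : ℕ)):ℝ)^2 := by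
        apply add_le_add
        · rw [Finset.sum_const, Nat.card_Ioc]
          simp [nsmul_eq_mul, div_eq_mul_inv, hs]
        · have hre : Finset.Ioc s N = Finset.Ico (s+1) (N+1) := by
            ext x; simp [Finset.mem_Ioc, Finset.mem_Ico]
          rw [hre, Finset.sum_Ico_eq_sum_range]
          simp only [show ∀ k, s + 1 + k = k + (s + 1) from fun k => by omega]
          apply Summable.sum_le_tsum
          · intro k _
            positivity
          · have : Summable (fun k : ℕ => 1/(((k + (s + 1) : ℕ)):ℝ)^2) := by
              have := (summable_nat_add_iff (s+1)).mpr
                (Real.summable_one_div_nat_pow.mpr one_lt_two)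
              exact this.congr (by intro k; push_cast; ring_nf)
            exact this.congr (by intro k; push_cast; ring_nf)

lemma sqrt_tendsto : Filter.Tendsto Nat.sqrt atTop atTop := by
  apply tendsto_atTop_atTop_of_monotone (fun a b h => Nat.sqrt_le_sqrt h)
  intro b; exact ⟨b ^ 2, le_of_eq (Nat.sqrt_eq' b).symm⟩

theorem density_squarefree :
    Filter.Tendsto
      (fun N : ℕ =>
        (((Finset.Icc 1 N).filter (fun n => Squarefree n)).card : ℝ) / (N : ℝ))
      Filter.atTop (nhds (6 / Real.pi ^ 2)) := by
  set g : ℕ → ℝ := fun d => (μ d : ℝ) / (d:ℝ)^2 with hg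
  set T : ℕ → ℝ := fun N => ∑ d ∈ Finset.Icc 1 N, g d with hTdef
  set E : ℕ → ℝ := fun N =>
    ∑ d ∈ Finset.Icc 1 N, ((μ d : ℝ) * ((N / d^2 : ℕ) : ℝ)/(N:ℝ) - g d) with hEdef
  have hF : ∀ N : ℕ,
      (((Finset.Icc 1 N).filter (fun n => Squarefree n)).card : ℝ) / (N : ℝ)
        = T N + E N := by
    intro N
    have h1 : (((Finset.Icc 1 N).filter (fun n => Squarefree n)).card : ℝ)
        = ∑ d ∈ Finset.Icc 1 N, (μ d : ℝ) * ((N / d^2 : ℕ) : ℝ) := by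
      have := congrArg (fun z : ℤ => (z : ℝ)) (count_squarefree N)
      push_cast at this ⊢
      exact this
    rw [h1, Finset.sum_div, hEdef]
    simp only [Finset.sum_sub_distrib]
    ring
  have hT : Filter.Tendsto T atTop (nhds (6 / π ^ 2)) := by
    have hps := summable_mu.hasSum.tendsto_sum_nat
    rw [tsum_mu] at hps
    have hcomp := hps.comp (tendsto_add_atTop_nat 1)
    apply hcomp.congr
    intro N
    show ∑ d ∈ Finset.range (N + 1), g d = T N
    rw [Finset.range_eq_Ico]
    rw [← Finset.sum_Ico_consecutive _ (Nat.zero_le 1) (by omega : 1 ≤ N + 1)]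
    have h0 : ∑ d ∈ Finset.Ico 0 1, g d = 0 := by
      simp [hg]
    rw [h0, zero_add, hTdef, Finset.Ico_add_one_right_eq_Icc]
  have hE : Filter.Tendsto E atTop (nhds 0) := by
    apply squeeze_zero_norm'
      (a := fun N => (Nat.sqrt N : ℝ)/(N:ℝ)
        + ∑' k : ℕ, 1/(((k + (Nat.sqrt N + 1) : ℕ)):ℝ)^2)
    · filter_upwards [eventually_ge_atTop 1] with N hN
      rw [Real.norm_eq_abs]
      exact err_bound N hN
    · rw [show (0:ℝ) = 0 + 0 by ring]
      apply Filter.Tendsto.add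
      · apply squeeze_zero' (g := fun N => 1/(Nat.sqrt N : ℝ))
        · filter_upwards with N; positivity
        · filter_upwards [eventually_ge_atTop 1] with N hN
          have hs1 : 1 ≤ Nat.sqrt N := by
            have := Nat.sqrt_le_sqrt hN
            simpa using this
          have hss : Nat.sqrt N ^ 2 ≤ N := Nat.sqrt_le' N
          have hssr : ((Nat.sqrt N : ℝ)) ^ 2 ≤ (N:ℝ) := by exact_mod_cast hss
          rw [div_le_div_iff₀ (by exact_mod_cast Nat.lt_of_lt_of_le Nat.zero_lt_one hN)
            (by exact_mod_cast hs1)]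
          nlinarith
        · exact tendsto_one_div_atTop_nhds_zero_nat.comp sqrt_tendsto
      · have h0 := tendsto_sum_nat_add (f := fun d : ℕ => 1/(d:ℝ)^2)
        have hc : Filter.Tendsto (fun N : ℕ => Nat.sqrt N + 1) atTop atTop :=
          tendsto_atTop_mono (fun N => Nat.le_succ _) sqrt_tendsto
        have := h0.comp hc
        exact this
  have := hT.add hE
  rw [add_zero] at this
  exact this.congr fun N => (hF N).symm
end

section
/- The natural density of nonsquarefree numbers is 1 − 6/π²: the quantity (#{n : 1 ≤ n ≤ N and n is not squarefree})/N tends to 1 − 6/π² as N → ∞. -/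
open Filter Real Finset ArithmeticFunction
open scoped ArithmeticFunction.Moebius ArithmeticFunction.zeta

lemma sq_dvd_iff_aux {a b d : ℕ} (ha : Squarefree a) (hb : b ≠ 0) (hd : d ≠ 0) :
    d ^ 2 ∣ b ^ 2 * a ↔ d ∣ b := by
  have ha0 : a ≠ 0 := ha.ne_zero
  have hn0 : b ^ 2 * a ≠ 0 := mul_ne_zero (pow_ne_zero _ hb) ha0
  rw [← Nat.factorization_le_iff_dvd (pow_ne_zero _ hd) hn0,
    ← Nat.factorization_le_iff_dvd hd hb]
  have hfa := (Nat.squarefree_iff_factorization_le_one ha0).mp ha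
  constructor
  · intro h p
    have := h p
    simp only [Nat.factorization_mul (pow_ne_zero _ hb) ha0, Nat.factorization_pow,
      Finsupp.coe_add, Finsupp.coe_smul, Pi.add_apply, Pi.smul_apply, smul_eq_mul] at this
    have := hfa p
    omega
  · intro h p
    have h1 := h p
    simp only [Nat.factorization_mul (pow_ne_zero _ hb) ha0, Nat.factorization_pow,
      Finsupp.coe_add, Finsupp.coe_smul, Pi.add_apply, Pi.smul_apply, smul_eq_mul]
    omega

lemma sum_moebius_divisors (b : ℕ) :
    ∑ d ∈ b.divisors, μ d = if b = 1 then 1 else 0 := by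
  have h : (μ * ζ : ArithmeticFunction ℤ) b = (1 : ArithmeticFunction ℤ) b := by
    rw [moebius_mul_coe_zeta]
  rw [coe_mul_zeta_apply, one_apply] at h
  exact h

lemma sum_ite_sq_dvd (N n : ℕ) (h1 : 1 ≤ n) (h2 : n ≤ N) :
    ∑ d ∈ Finset.Icc 1 N, (if d ^ 2 ∣ n then μ d else 0) =
      if Squarefree n then 1 else 0 := by
  obtain ⟨a, b, hab, ha⟩ := Nat.sq_mul_squarefree n
  have hn0 : n ≠ 0 := by omega
  have hb0 : b ≠ 0 := by rintro rfl; simp at hab; omega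
  have ha0 : a ≠ 0 := ha.ne_zero
  have hbn : b ≤ n := by
    calc b ≤ b ^ 2 * a := by nlinarith [Nat.one_le_iff_ne_zero.mpr hb0,
      Nat.one_le_iff_ne_zero.mpr ha0]
    _ = n := hab
  have key : ∀ d ∈ Finset.Icc 1 N,
      (if d ^ 2 ∣ n then (μ d : ℤ) else 0) = if d ∣ b then μ d else 0 := by
    intro d hd
    simp only [Finset.mem_Icc] at hd
    have hd0 : d ≠ 0 := by omega
    rw [← hab]; simp only [sq_dvd_iff_aux ha hb0 hd0]
  rw [Finset.sum_congr rfl key, ← Finset.sum_filter]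
  have hfil : (Finset.Icc 1 N).filter (· ∣ b) = b.divisors := by
    ext d
    simp only [Finset.mem_filter, Finset.mem_Icc, Nat.mem_divisors, hb0, and_true,
      ne_eq, not_false_eq_true]
    constructor
    · tauto
    · intro hdb
      refine ⟨⟨Nat.one_le_iff_ne_zero.mpr ?_, le_trans (le_trans (Nat.le_of_dvd ?_ hdb) hbn) h2⟩, hdb⟩
      · rintro rfl; exact hb0 (Nat.eq_zero_of_zero_dvd hdb)
      · omega
  rw [hfil, sum_moebius_divisors]
  have hiff : b = 1 ↔ Squarefree n := by
    constructor
    · rintro rfl; rw [one_pow, one_mul] at hab; exact hab ▸ ha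
    · intro hsf
      have : b * b ∣ n := ⟨a, by rw [← hab]; ring⟩
      exact Nat.isUnit_iff.mp (hsf b this)
  simp only [hiff]

lemma card_sf_eq (N : ℕ) :
    (((Finset.Icc 1 N).filter (fun n => Squarefree n)).card : ℤ) =
      ∑ d ∈ Finset.Icc 1 N, μ d * (N / d ^ 2 : ℕ) := by
  have h1 : (((Finset.Icc 1 N).filter (fun n => Squarefree n)).card : ℤ) =
      ∑ n ∈ Finset.Icc 1 N, if Squarefree n then 1 else 0 := by
    rw [Finset.card_filter]; push_cast; simp
  rw [h1]
  rw [Finset.sum_congr rfl (fun n hn => by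
    rw [← sum_ite_sq_dvd N n (Finset.mem_Icc.mp hn).1 (Finset.mem_Icc.mp hn).2])]
  rw [Finset.sum_comm]
  apply Finset.sum_congr rfl
  intro d _
  rw [← Finset.sum_filter, Finset.sum_const, nsmul_eq_mul, mul_comm]
  congr 1
  have hIoc : Finset.Icc 1 N = Finset.Ioc 0 N := by
    ext x; simp only [Finset.mem_Icc, Finset.mem_Ioc]; omega
  rw [hIoc]
  exact_mod_cast congrArg (Nat.cast : ℕ → ℤ) (Nat.Ioc_filter_dvd_card_eq_div N (d ^ 2))

open scoped LSeries.notation in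
lemma moebius_tsum : ∑' d : ℕ, (μ d : ℝ) / (d : ℝ) ^ 2 = 6 / π ^ 2 := by
  have hπ : (π : ℝ) ≠ 0 := Real.pi_ne_zero
  have hL : LSeries ↗μ 2 = 6 / (π : ℂ) ^ 2 := by
    have hs : 1 < (2 : ℂ).re := by norm_num
    have h1 := LSeries_zeta_mul_Lseries_moebius hs
    rw [LSeries_zeta_eq_riemannZeta hs, riemannZeta_two] at h1
    have hπc : ((π : ℂ)) ^ 2 ≠ 0 := by
      simp [Real.pi_ne_zero]
    field_simp at h1 ⊢
    linear_combination h1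
  have hterm : ∀ d : ℕ, (((μ d : ℝ) / (d : ℝ) ^ 2 : ℝ) : ℂ) = LSeries.term ↗μ 2 d := by
    intro d
    rcases eq_or_ne d 0 with rfl | hd
    · simp [LSeries.term_def]
    · rw [LSeries.term_def, if_neg hd]
      rw [show (2 : ℂ) = ((2 : ℕ) : ℂ) by norm_num, Complex.cpow_natCast]
      push_cast
      ring
  have : ((∑' d : ℕ, (μ d : ℝ) / (d : ℝ) ^ 2 : ℝ) : ℂ) = ∑' d : ℕ, (((μ d : ℝ) / (d : ℝ) ^ 2 : ℝ) : ℂ) :=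
    Complex.ofReal_tsum (fun d : ℕ => (μ d : ℝ) / (d : ℝ) ^ 2)
  rw [tsum_congr hterm, ← LSeries, hL] at this
  have h6 : ((6 / π ^ 2 : ℝ) : ℂ) = 6 / (π : ℂ) ^ 2 := by push_cast; ring
  exact Complex.ofReal_injective (this.trans h6.symm)

lemma tsum_rep (N : ℕ) (hN : 1 ≤ N) :
    (((Finset.Icc 1 N).filter (fun n => Squarefree n)).card : ℝ) / N =
      ∑' d : ℕ, (μ d : ℝ) * ((N / d ^ 2 : ℕ) : ℝ) / N := by
  rw [tsum_eq_sum (s := Finset.Icc 1 N) ?h]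
  · rw [← Finset.sum_div]
    congr 1
    have := card_sf_eq N
    have := congrArg (Int.cast : ℤ → ℝ) this
    push_cast at this ⊢
    exact this
  · intro d hd
    simp only [Finset.mem_Icc, not_and, not_le] at hd
    rcases Nat.eq_zero_or_pos d with rfl | hd1
    · simp
    · have : N < d := hd hd1
      have : N / d ^ 2 = 0 := Nat.div_eq_of_lt (by nlinarith)
      simp [this]

lemma sf_limit :
    Filter.Tendsto
      (fun N : ℕ =>
        (((Finset.Icc 1 N).filter (fun n => Squarefree n)).card : ℝ) / (N : ℝ))
      Filter.atTop (nhds (6 / π ^ 2)) := by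
  have key : Filter.Tendsto
      (fun N : ℕ => ∑' d : ℕ, (μ d : ℝ) * ((N / d ^ 2 : ℕ) : ℝ) / N)
      Filter.atTop (nhds (∑' d : ℕ, (μ d : ℝ) / (d : ℝ) ^ 2)) := by
    apply tendsto_tsum_of_dominated_convergence (bound := fun d : ℕ => 1 / (d : ℝ) ^ 2)
      (Real.summable_one_div_nat_pow.mpr one_lt_two)
    · intro d
      rcases Nat.eq_zero_or_pos d with rfl | hd1
      · simp
      · have hd2 : (0 : ℝ) < (d : ℝ) ^ 2 := by positivity
        have hr : Filter.Tendsto (fun N : ℕ => ((N % d ^ 2 : ℕ) : ℝ) / N)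
            Filter.atTop (nhds 0) := by
          have hle : ∀ n : ℕ, ((n % d ^ 2 : ℕ) : ℝ) / n ≤ ((d : ℝ) ^ 2) / n := by
            intro n
            rcases Nat.eq_zero_or_pos n with rfl | hn
            · simp
            · gcongr
              exact_mod_cast (Nat.mod_lt n (by positivity)).le
          exact squeeze_zero (fun n => by positivity) hle
            (tendsto_const_div_atTop_nhds_zero_nat ((d : ℝ) ^ 2))
        have hlim : Filter.Tendsto
            (fun N : ℕ => (μ d : ℝ) / (d : ℝ) ^ 2 * (1 - ((N % d ^ 2 : ℕ) : ℝ) / N))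
            Filter.atTop (nhds ((μ d : ℝ) / (d : ℝ) ^ 2)) := by
          have h := ((tendsto_const_nhds (x := (1:ℝ))).sub hr).const_mul ((μ d : ℝ) / (d : ℝ) ^ 2)
          simpa using h
        apply hlim.congr'
        filter_upwards [Filter.eventually_ge_atTop 1] with N hN
        have hN0 : (0 : ℝ) < (N : ℝ) := by exact_mod_cast hN
        have hdiv : ((N / d ^ 2 : ℕ) : ℝ) = ((N : ℝ) - ((N % d ^ 2 : ℕ) : ℝ)) / (d : ℝ) ^ 2 := by
          have h := Nat.div_add_mod N (d ^ 2)
          have h' : ((d ^ 2 * (N / d ^ 2) + N % d ^ 2 : ℕ) : ℝ) = (N : ℝ) := by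
            exact_mod_cast congrArg (Nat.cast : ℕ → ℝ) h
          push_cast at h'
          field_simp
          linarith
        rw [hdiv]
        field_simp
    · filter_upwards with N
      intro d
      rcases Nat.eq_zero_or_pos d with rfl | hd1
      · simp
      rcases Nat.eq_zero_or_pos N with rfl | hN1
      · simp
      have hd2 : (0 : ℝ) < (d : ℝ) ^ 2 := by positivity
      have hN0 : (0 : ℝ) < (N : ℝ) := by exact_mod_cast hN1
      rw [Real.norm_eq_abs, abs_div, abs_mul, Nat.abs_cast, Nat.abs_cast]
      have h1 : |(μ d : ℝ)| ≤ 1 := by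
        have := @ArithmeticFunction.abs_moebius_le_one d
        calc |(μ d : ℝ)| = ((|μ d| : ℤ) : ℝ) := by push_cast; ring
          _ ≤ 1 := by exact_mod_cast this
      have h2 : ((N / d ^ 2 : ℕ) : ℝ) ≤ (N : ℝ) / (d : ℝ) ^ 2 := by
        exact_mod_cast Nat.cast_div_le
      calc |(μ d : ℝ)| * ((N / d ^ 2 : ℕ) : ℝ) / (N : ℝ)
          ≤ 1 * ((N : ℝ) / (d : ℝ) ^ 2) / (N : ℝ) := by gcongr
        _ = 1 / (d : ℝ) ^ 2 := by field_simp
  rw [moebius_tsum] at key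
  apply key.congr'
  filter_upwards [Filter.eventually_ge_atTop 1] with N hN
  exact (tsum_rep N hN).symm

theorem density_nonsquarefree :
    Filter.Tendsto
      (fun N : ℕ =>
        (((Finset.Icc 1 N).filter (fun n => ¬ Squarefree n)).card : ℝ) / (N : ℝ))
      Filter.atTop (nhds (1 - 6 / Real.pi ^ 2)) := by
  have key := (tendsto_const_nhds (x := (1 : ℝ))).sub sf_limit
  apply key.congr'
  filter_upwards [Filter.eventually_ge_atTop 1] with N hN
  have hcard := Finset.card_filter_add_card_filter_not
    (s := Finset.Icc 1 N) (p := fun n => Squarefree n)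
  rw [Nat.card_Icc] at hcard
  have hN0 : (0 : ℝ) < (N : ℝ) := by exact_mod_cast hN
  have hc : (((Finset.Icc 1 N).filter (fun n => Squarefree n)).card : ℝ) +
      (((Finset.Icc 1 N).filter (fun n => ¬ Squarefree n)).card : ℝ) = (N : ℝ) := by
    have : ((Finset.Icc 1 N).filter (fun n => Squarefree n)).card +
        ((Finset.Icc 1 N).filter (fun n => ¬ Squarefree n)).card = N := by omega
    exact_mod_cast this
  field_simp
  linarith
end

section
/- The natural density of squarefree numbers coprime to 6 is 3/π²: the quantity (#{n : 1 ≤ n ≤ N, n is squarefree and gcd(n, 6) = 1})/N tends to 3/π² as N → ∞. -/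
open Finset ArithmeticFunction Complex LSeries.notation Real
open scoped ArithmeticFunction.zeta ArithmeticFunction.Moebius

/-- number of k in [1,x] coprime to 6 -/
def C6 (x : ℕ) : ℕ := ((Finset.Icc 1 x).filter (fun k => Nat.gcd k 6 = 1)).card

lemma C6_block (q : ℕ) :
    ((Finset.Ico 1 (1 + 6 * q)).filter (fun k => Nat.gcd k 6 = 1)).card = 2 * q := by
  induction q with
  | zero => simp
  | succ q ih =>
    have hx : 1 + 6 * (q + 1) = 1 + 6 * q + 6 := by ring
    have hsplit : Finset.Ico 1 (1 + 6 * q + 6) =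
        Finset.Ico 1 (1 + 6 * q) ∪ Finset.Ico (1 + 6 * q) (1 + 6 * q + 6) := by
      rw [Finset.Ico_union_Ico_eq_Ico] <;> omega
    have hdisj : Disjoint (Finset.Ico 1 (1 + 6 * q)) (Finset.Ico (1 + 6 * q) (1 + 6 * q + 6)) := by
      apply Finset.Ico_disjoint_Ico_consecutive
    rw [hx, hsplit, Finset.filter_union, Finset.card_union_of_disjoint (Finset.disjoint_filter_filter hdisj), ih]
    have h2 : ((Finset.Ico (1 + 6 * q) (1 + 6 * q + 6)).filter (fun k => Nat.gcd k 6 = 1)).card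
        = Nat.totient 6 := by
      rw [← Nat.filter_coprime_Ico_eq_totient 6 (1 + 6 * q)]
      congr 1
      apply Finset.filter_congr
      intro x _
      simp [Nat.Coprime, Nat.gcd_comm, eq_comm]
    rw [h2]
    have : Nat.totient 6 = 2 := by decide
    omega

lemma C6_bounds (x : ℕ) : 2 * (x / 6) ≤ C6 x ∧ C6 x ≤ 2 * (x / 6) + 2 := by
  have hx : Finset.Icc 1 x = Finset.Ico 1 (x + 1) := by
    rw [Finset.Ico_add_one_right_eq_Icc]
  set q := x / 6 with hq
  have h1 : Finset.Ico 1 (1 + 6 * q) ⊆ Finset.Ico 1 (x + 1) := by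
    apply Finset.Ico_subset_Ico le_rfl; have := Nat.div_mul_le_self x 6; omega
  have h2 : Finset.Ico 1 (x + 1) ⊆ Finset.Ico 1 (1 + 6 * (q + 1)) := by
    apply Finset.Ico_subset_Ico le_rfl
    omega
  constructor
  · rw [← C6_block q]; unfold C6; rw [hx]
    exact Finset.card_le_card (Finset.filter_subset_filter _ h1)
  · have := Finset.card_le_card (Finset.filter_subset_filter (fun k => Nat.gcd k 6 = 1) h2)
    unfold C6; rw [hx]
    calc _ ≤ _ := this
    _ = 2 * (q + 1) := C6_block (q + 1)
    _ = 2 * q + 2 := by ring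

lemma C6_real (x : ℕ) : |(C6 x : ℝ) - x / 3| ≤ 2 := by
  obtain ⟨h1, h2⟩ := C6_bounds x
  set q := x / 6 with hq
  have e1 : 6 * q ≤ x ∧ x < 6 * q + 6 := by omega
  have h1' : (2 * q : ℝ) ≤ C6 x := by exact_mod_cast h1
  have h2' : (C6 x : ℝ) ≤ 2 * q + 2 := by exact_mod_cast h2
  have e1' : (6 : ℝ) * q ≤ x := by exact_mod_cast e1.1
  have e2' : (x : ℝ) < 6 * q + 6 := by exact_mod_cast e1.2
  rw [abs_le]; constructor <;> nlinarith

lemma floorRoot_two_eq_one_iff {n : ℕ} (hn : n ≠ 0) :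
    Nat.floorRoot 2 n = 1 ↔ Squarefree n := by
  have hb : Nat.floorRoot 2 n ≠ 0 := Nat.floorRoot_ne_zero.2 ⟨two_ne_zero, hn⟩
  rw [Nat.squarefree_iff_factorization_le_one hn]
  constructor
  · intro h p
    have : (Nat.floorRoot 2 n).factorization = 0 := by rw [h]; simp
    rw [Nat.factorization_floorRoot] at this
    have := DFunLike.congr_fun this p
    simp only [Finsupp.floorDiv_apply, Finsupp.coe_zero, Pi.zero_apply,
      Nat.floorDiv_eq_div] at this
    omega
  · intro h
    have : (Nat.floorRoot 2 n).factorization = 0 := by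
      rw [Nat.factorization_floorRoot]
      ext p
      simp only [Finsupp.floorDiv_apply, Nat.floorDiv_eq_div, Finsupp.coe_zero, Pi.zero_apply]
      have := h p
      omega
    rcases (Nat.factorization_eq_zero_iff' _).1 this with h0 | h1
    · exact absurd h0 hb
    · exact h1

lemma sum_moebius_indicator {n K : ℕ} (hn : n ≠ 0) (hK : Nat.sqrt n ≤ K) :
    (∑ d ∈ (Finset.Icc 1 K).filter (fun d => d ^ 2 ∣ n), μ d)
      = if Squarefree n then 1 else 0 := by
  set b := Nat.floorRoot 2 n with hbdef
  have hb : b ≠ 0 := Nat.floorRoot_ne_zero.2 ⟨two_ne_zero, hn⟩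
  have hbsq : b ^ 2 ∣ n := Nat.floorRoot_pow_dvd
  have hble : b ≤ Nat.sqrt n := by
    rw [Nat.le_sqrt]
    calc b * b = b ^ 2 := (sq b).symm
    _ ≤ n := Nat.le_of_dvd (Nat.pos_of_ne_zero hn) hbsq
  have hset : (Finset.Icc 1 K).filter (fun d => d ^ 2 ∣ n) = b.divisors := by
    ext d
    simp only [Finset.mem_filter, Finset.mem_Icc, Nat.mem_divisors]
    constructor
    · rintro ⟨⟨h1, h2⟩, h3⟩
      exact ⟨Nat.pow_dvd_iff_dvd_floorRoot.1 h3, hb⟩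
    · rintro ⟨hd, -⟩
      have hd0 : d ≠ 0 := fun h => hb (Nat.eq_zero_of_zero_dvd (h ▸ hd))
      refine ⟨⟨Nat.one_le_iff_ne_zero.2 hd0, le_trans (le_trans (Nat.le_of_dvd (Nat.pos_of_ne_zero hb) hd) hble) hK⟩, ?_⟩
      exact Nat.pow_dvd_iff_dvd_floorRoot.2 hd
  rw [hset]
  have h1 : (∑ d ∈ b.divisors, μ d) = (μ * ζ : ArithmeticFunction ℤ) b := by
    rw [coe_mul_zeta_apply]
  rw [h1, moebius_mul_coe_zeta, one_apply]
  simp only [floorRoot_two_eq_one_iff hn |>.symm, hbdef]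
lemma card_inner (N d : ℕ) (hd : 1 ≤ d) :
    ((Finset.Icc 1 N).filter (fun n => Nat.gcd n 6 = 1 ∧ d ^ 2 ∣ n)).card
      = if Nat.gcd d 6 = 1 then C6 (N / d ^ 2) else 0 := by
  have hd2 : 0 < d ^ 2 := pow_pos hd 2
  split_ifs with h
  · refine Finset.card_bij' (fun n _ => n / d ^ 2) (fun k _ => d ^ 2 * k) ?_ ?_ ?_ ?_
    · rintro n hn
      simp only [Finset.mem_filter, Finset.mem_Icc] at hn ⊢
      obtain ⟨⟨h1, h2⟩, h3, h4⟩ := hn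
      obtain ⟨k, rfl⟩ := h4
      rw [Nat.mul_div_cancel_left k hd2]
      refine ⟨⟨?_, ?_⟩, ?_⟩
      · rcases Nat.eq_zero_or_pos k with rfl | hk
        · simp at h1
        · exact hk
      · exact Nat.le_div_iff_mul_le hd2 |>.2 (by rw [Nat.mul_comm]; omega)
      · exact Nat.Coprime.coprime_dvd_left (Dvd.intro_left _ rfl) h3
    · rintro k hk
      simp only [Finset.mem_filter, Finset.mem_Icc] at hk ⊢
      obtain ⟨⟨h1, h2⟩, h3⟩ := hk
      refine ⟨⟨Nat.one_le_iff_ne_zero.2 (by positivity), ?_⟩, ?_, Dvd.intro k rfl⟩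
      · calc d ^ 2 * k ≤ d ^ 2 * (N / d ^ 2) := Nat.mul_le_mul_left _ h2
        _ ≤ N := Nat.mul_div_le N (d ^ 2)
      · exact Nat.Coprime.mul ((Nat.Coprime.pow_left 2 h)) h3
    · intro n hn
      simp only [Finset.mem_filter, Finset.mem_Icc] at hn
      exact Nat.mul_div_cancel' hn.2.2
    · intro k _
      exact Nat.mul_div_cancel_left k hd2
  · rw [Finset.card_eq_zero, Finset.filter_eq_empty_iff]
    rintro n hn ⟨h1, h2⟩
    exact h (Nat.eq_one_of_dvd_one (h1 ▸ Nat.gcd_dvd_gcd_of_dvd_left 6 (dvd_trans (dvd_pow_self d two_ne_zero) h2)))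

lemma count_eq (N : ℕ) :
    ((((Finset.Icc 1 N).filter (fun n => Squarefree n ∧ Nat.gcd n 6 = 1)).card : ℤ))
      = ∑ d ∈ Finset.Icc 1 (Nat.sqrt N),
          (if Nat.gcd d 6 = 1 then μ d * (C6 (N / d ^ 2) : ℤ) else 0) := by
  have step1 : (((Finset.Icc 1 N).filter (fun n => Squarefree n ∧ Nat.gcd n 6 = 1)).card : ℤ)
      = ∑ n ∈ (Finset.Icc 1 N).filter (fun n => Nat.gcd n 6 = 1),
          (if Squarefree n then (1 : ℤ) else 0) := by
    rw [Finset.natCast_card_filter (fun n => Squarefree n)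
      ((Finset.Icc 1 N).filter (fun n => Nat.gcd n 6 = 1)) |>.symm]
    simp only [Finset.filter_filter]
    congr 2
    apply Finset.filter_congr; intro x _
    constructor
    · rintro ⟨a, b⟩; exact ⟨b, a⟩
    · rintro ⟨a, b⟩; exact ⟨b, a⟩
  rw [step1]
  have step2 : ∀ n ∈ (Finset.Icc 1 N).filter (fun n => Nat.gcd n 6 = 1),
      (if Squarefree n then (1 : ℤ) else 0)
        = ∑ d ∈ Finset.Icc 1 (Nat.sqrt N), (if d ^ 2 ∣ n then (μ d : ℤ) else 0) := by
    intro n hn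
    simp only [Finset.mem_filter, Finset.mem_Icc] at hn
    rw [← Finset.sum_filter, sum_moebius_indicator (by omega) (Nat.sqrt_le_sqrt hn.1.2)]
  rw [Finset.sum_congr rfl step2, Finset.sum_comm]
  apply Finset.sum_congr rfl
  intro d hd
  simp only [Finset.mem_Icc] at hd
  rw [← Finset.sum_filter, Finset.sum_const, Finset.filter_filter]
  rw [card_inner N d hd.1]
  split_ifs with h
  · rw [nsmul_eq_mul]; ring
  · simp

noncomputable def fS : ℕ → ℝ := fun n => if Nat.gcd n 6 = 1 then (μ n : ℝ) / (n : ℝ) ^ 2 else 0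

lemma gcd6_iff (n : ℕ) : Nat.gcd n 6 = 1 ↔ ¬ 2 ∣ n ∧ ¬ 3 ∣ n := by
  have h6 : (6 : ℕ) = 2 * 3 := by norm_num
  constructor
  · intro h
    have hc : Nat.Coprime n 6 := h
    rw [h6, Nat.coprime_mul_iff_right] at hc
    exact ⟨fun hd => by simpa [Nat.coprime_comm] using (Nat.Prime.coprime_iff_not_dvd Nat.prime_two).1 hc.1.symm hd,
      fun hd => by simpa using (Nat.Prime.coprime_iff_not_dvd Nat.prime_three).1 hc.2.symm hd⟩
  · rintro ⟨h2, h3⟩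
    have c2 : Nat.Coprime n 2 := ((Nat.Prime.coprime_iff_not_dvd Nat.prime_two).2 h2).symm
    have c3 : Nat.Coprime n 3 := ((Nat.Prime.coprime_iff_not_dvd Nat.prime_three).2 h3).symm
    have : Nat.Coprime n 6 := by rw [h6, Nat.coprime_mul_iff_right]; exact ⟨c2, c3⟩
    exact this

lemma hasSum_coprime6_inv_sq :
    HasSum (fun n : ℕ => if Nat.gcd n 6 = 1 then 1 / (n : ℝ) ^ 2 else 0) (π ^ 2 / 9) := by
  have h := hasSum_zeta_two
  have key : ∀ m : ℕ, m ≠ 0 → HasSum (fun n : ℕ => if m ∣ n then 1 / (n : ℝ) ^ 2 else 0)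
      (π ^ 2 / 6 / (m : ℝ) ^ 2) := by
    intro m hm
    have hinj : Function.Injective (fun k : ℕ => m * k) :=
      fun a b hab => by simpa [hm] using hab
    rw [← Function.Injective.hasSum_iff hinj ?_]
    · have h2 := h.div_const ((m : ℝ) ^ 2)
      apply h2.congr_fun
      intro k
      simp only [Function.comp_apply]
      rw [if_pos (Dvd.intro k rfl)]
      push_cast
      rcases Nat.eq_zero_or_pos k with rfl | hk
      · simp
      · field_simp
    · intro n hn
      rw [if_neg]
      rintro ⟨k, rfl⟩
      exact hn ⟨k, rfl⟩
  have h2 := key 2 two_ne_zero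
  have h3 := key 3 three_ne_zero
  have h6 := key 6 (by norm_num)
  have comb := ((h.sub h2).sub h3).add h6
  have heq : (fun n : ℕ => 1 / (n : ℝ) ^ 2 - (if 2 ∣ n then 1 / (n : ℝ) ^ 2 else 0)
      - (if 3 ∣ n then 1 / (n : ℝ) ^ 2 else 0) + (if 6 ∣ n then 1 / (n : ℝ) ^ 2 else 0))
      = (fun n : ℕ => if Nat.gcd n 6 = 1 then 1 / (n : ℝ) ^ 2 else 0) := by
    funext n
    rcases Classical.em (2 ∣ n) with hd2 | hd2 <;> rcases Classical.em (3 ∣ n) with hd3 | hd3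
    · rw [if_pos hd2, if_pos hd3, if_pos (show (6:ℕ) ∣ n by omega),
        if_neg (show ¬(Nat.gcd n 6 = 1) by rw [gcd6_iff]; tauto)]; ring
    · rw [if_pos hd2, if_neg hd3, if_neg (show ¬(6:ℕ) ∣ n by omega),
        if_neg (show ¬(Nat.gcd n 6 = 1) by rw [gcd6_iff]; tauto)]; ring
    · rw [if_neg hd2, if_pos hd3, if_neg (show ¬(6:ℕ) ∣ n by omega),
        if_neg (show ¬(Nat.gcd n 6 = 1) by rw [gcd6_iff]; tauto)]; ring
    · rw [if_neg hd2, if_neg hd3, if_neg (show ¬(6:ℕ) ∣ n by omega),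
        if_pos (show Nat.gcd n 6 = 1 by rw [gcd6_iff]; tauto)]; ring
  rw [heq] at comb
  convert comb using 1
  norm_num
  · rfl
  ring

noncomputable def fC : ℕ → ℂ := fun n => if Nat.gcd n 6 = 1 then (μ n : ℂ) else 0
noncomputable def gC : ℕ → ℂ := fun n => if Nat.gcd n 6 = 1 then 1 else 0

lemma gcd_six_ne_one_factor {a b : ℕ} (h : ¬ Nat.gcd (a * b) 6 = 1) :
    fC a = 0 ∨ gC b = 0 := by
  obtain ⟨q, hq, hqn, hq6⟩ := Nat.Prime.not_coprime_iff_dvd.1 h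
  rcases (Nat.Prime.dvd_mul hq).1 hqn with hqa | hqb
  · left
    rw [fC, if_neg]
    intro hga
    exact Nat.Prime.one_lt hq |>.ne' (Nat.eq_one_of_dvd_one (hga ▸ Nat.dvd_gcd hqa hq6))
  · right
    rw [gC, if_neg]
    intro hgb
    exact Nat.Prime.one_lt hq |>.ne' (Nat.eq_one_of_dvd_one (hgb ▸ Nat.dvd_gcd hqb hq6))

lemma conv_eq_delta : LSeries.convolution fC gC = LSeries.delta := by
  funext n
  rw [LSeries.convolution_def]
  rcases eq_or_ne n 0 with rfl | hn0
  · simp [LSeries.delta]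
  rcases eq_or_ne n 1 with rfl | hn1
  · simp [Nat.divisorsAntidiagonal_one, fC, gC, LSeries.delta]
  rw [LSeries.delta, if_neg hn1]
  by_cases hn6 : Nat.gcd n 6 = 1
  · have hterm : ∀ p ∈ n.divisorsAntidiagonal, fC p.1 * gC p.2 = ((μ p.1 : ℤ) : ℂ) := by
      intro p hp
      obtain ⟨hmul, -⟩ := Nat.mem_divisorsAntidiagonal.1 hp
      have h1 : Nat.gcd p.1 6 = 1 :=
        Nat.Coprime.coprime_dvd_left (Dvd.intro p.2 (hmul.symm ▸ rfl)) hn6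
      have h2 : Nat.gcd p.2 6 = 1 :=
        Nat.Coprime.coprime_dvd_left (Dvd.intro_left p.1 (hmul.symm ▸ rfl)) hn6
      rw [fC, gC, if_pos h1, if_pos h2, mul_one]
    show (∑ p ∈ n.divisorsAntidiagonal, fC p.1 * gC p.2) = 0
    rw [Finset.sum_congr rfl hterm]
    have : (∑ p ∈ n.divisorsAntidiagonal, ((μ p.1 : ℤ) : ℂ))
        = ((∑ p ∈ n.divisorsAntidiagonal, μ p.1 : ℤ) : ℂ) := by push_cast; ring
    rw [this]
    have h2 : (∑ p ∈ n.divisorsAntidiagonal, μ p.1) = ∑ d ∈ n.divisors, μ d :=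
      Nat.sum_divisorsAntidiagonal (fun a _ => μ a)
    rw [h2, ← coe_mul_zeta_apply, moebius_mul_coe_zeta, one_apply, if_neg hn1]
    simp
  · show (∑ p ∈ n.divisorsAntidiagonal, fC p.1 * gC p.2) = 0
    rw [Finset.sum_eq_zero]
    intro p hp
    obtain ⟨hmul, -⟩ := Nat.mem_divisorsAntidiagonal.1 hp
    rcases gcd_six_ne_one_factor (hmul ▸ hn6) with h | h
    · rw [h, zero_mul]
    · rw [h, mul_zero]

lemma hf_summable : LSeriesSummable fC 2 := by
  apply LSeriesSummable_of_bounded_of_one_lt_re (m := 1)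
  · intro n _
    rw [fC]
    split_ifs
    · rw [show ((μ n : ℤ) : ℂ) = ((( μ n : ℤ) : ℝ) : ℂ) by push_cast; ring,
        Complex.norm_real, Real.norm_eq_abs]
      exact_mod_cast abs_moebius_le_one
    · simp
  · norm_num

lemma hg_summable : LSeriesSummable gC 2 := by
  apply LSeriesSummable_of_bounded_of_one_lt_re (m := 1)
  · intro n _
    rw [gC]
    split_ifs <;> simp
  · norm_num

lemma term_gC (n : ℕ) :
    LSeries.term gC 2 n = ((if Nat.gcd n 6 = 1 then 1 / (n : ℝ) ^ 2 else 0 : ℝ) : ℂ) := by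
  rcases eq_or_ne n 0 with rfl | hn
  · simp [LSeries.term]
  · rw [LSeries.term_of_ne_zero hn, gC]
    have hpow : (n : ℂ) ^ (2 : ℂ) = ((n : ℝ) : ℂ) ^ (2 : ℕ) := by
      rw [show (2 : ℂ) = ((2 : ℕ) : ℂ) by norm_num, Complex.cpow_natCast]
      norm_num
    rw [hpow]
    split_ifs <;> push_cast <;> simp

lemma LSeries_gC : LSeries gC 2 = ((π ^ 2 / 9 : ℝ) : ℂ) := by
  have h : HasSum (LSeries.term gC 2) ((π ^ 2 / 9 : ℝ) : ℂ) := by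
    have := Complex.hasSum_ofReal.2 hasSum_coprime6_inv_sq
    apply this.congr_fun
    intro n
    rw [term_gC]
  exact h.tsum_eq

lemma term_fC (n : ℕ) : LSeries.term fC 2 n = ((fS n : ℝ) : ℂ) := by
  rcases eq_or_ne n 0 with rfl | hn
  · simp [LSeries.term, fS]
  · rw [LSeries.term_of_ne_zero hn, fC, fS]
    have hpow : (n : ℂ) ^ (2 : ℂ) = ((n : ℝ) : ℂ) ^ (2 : ℕ) := by
      rw [show (2 : ℂ) = ((2 : ℕ) : ℂ) by norm_num, Complex.cpow_natCast]
      norm_num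
    rw [hpow]
    split_ifs <;> push_cast <;> simp

lemma hasSum_fS : HasSum fS (9 / π ^ 2) := by
  have hprod : LSeries fC 2 * LSeries gC 2 = 1 := by
    rw [← LSeries_convolution' hf_summable hg_summable, conv_eq_delta]
    exact congrFun LSeries_delta 2
  have hne : ((π ^ 2 / 9 : ℝ) : ℂ) ≠ 0 := by
    simp only [ne_eq, Complex.ofReal_eq_zero]
    positivity
  have hf2 : LSeries fC 2 = ((9 / π ^ 2 : ℝ) : ℂ) := by
    rw [LSeries_gC] at hprod
    field_simp
    rw [mul_comm] at hprod
    field_simp at hprod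
    have hpi : (π : ℂ) ≠ 0 := by exact_mod_cast Complex.ofReal_ne_zero.2 Real.pi_ne_zero
    push_cast at hprod ⊢
    field_simp at hprod ⊢
    linear_combination hprod
  have h : HasSum (LSeries.term fC 2) (((9 / π ^ 2 : ℝ)) : ℂ) := hf2 ▸ hf_summable.hasSum
  rw [show (LSeries.term fC 2) = fun n => ((fS n : ℝ) : ℂ) from funext term_fC] at h
  exact Complex.hasSum_ofReal.1 h

noncomputable def tR : ℕ → ℝ := fun d => if Nat.gcd d 6 = 1 then (μ d : ℝ) / (3 * (d : ℝ) ^ 2) else 0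

lemma hasSum_tR : HasSum tR (3 / π ^ 2) := by
  have h := hasSum_fS.div_const 3
  rw [show (9 / π ^ 2) / 3 = 3 / π ^ 2 by ring] at h
  apply h.congr_fun
  intro d
  rw [tR, fS]
  split_ifs
  · ring
  · simp

lemma count_real (N : ℕ) :
    (((Finset.Icc 1 N).filter (fun n => Squarefree n ∧ Nat.gcd n 6 = 1)).card : ℝ)
      = ∑ d ∈ Finset.Icc 1 (Nat.sqrt N),
          (if Nat.gcd d 6 = 1 then (μ d : ℝ) * (C6 (N / d ^ 2) : ℝ) else 0) := by
  have h := congrArg (fun z : ℤ => (z : ℝ)) (count_eq N)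
  simp only [Int.cast_natCast, Int.cast_sum, apply_ite (fun z : ℤ => (z : ℝ)),
    Int.cast_mul, Int.cast_zero] at h
  exact h

lemma err_bound_s9 {N : ℕ} (hN : 1 ≤ N) {d : ℕ} (hd : 1 ≤ d) :
    |(if Nat.gcd d 6 = 1 then (μ d : ℝ) * (C6 (N / d ^ 2) : ℝ) else 0) / N - tR d| ≤ 3 / N := by
  have hNpos : (0 : ℝ) < N := by exact_mod_cast hN
  rw [tR]
  split_ifs with h
  · set M := N / d ^ 2 with hM
    have hd2 : (0 : ℝ) < (d : ℝ) ^ 2 := by positivity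
    have h1 := C6_real M
    have hub : (M : ℝ) * (d : ℝ) ^ 2 ≤ N := by exact_mod_cast Nat.div_mul_le_self N (d ^ 2)
    have hlb : (N : ℝ) < ((M : ℝ) + 1) * (d : ℝ) ^ 2 := by
      have hn : N < (M + 1) * d ^ 2 := by
        have e := Nat.div_add_mod N (d ^ 2)
        have r := Nat.mod_lt N (show 0 < d ^ 2 by positivity)
        rw [← hM] at e
        nlinarith
      exact_mod_cast hn
    have hmu : |(μ d : ℝ)| ≤ 1 := by
      rw [← Int.cast_abs]
      exact_mod_cast abs_moebius_le_one
    set c := (C6 M : ℝ)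
    set x := (N : ℝ) / (3 * (d : ℝ) ^ 2) with hx
    have key : |c - x| ≤ 3 := by
      have hxu : x ≤ ((M : ℝ) + 1) / 3 := by
        rw [hx, div_le_div_iff₀ (by positivity) (by norm_num)]
        nlinarith
      have hxl : (M : ℝ) / 3 ≤ x := by
        rw [hx, div_le_div_iff₀ (by norm_num) (by positivity)]
        nlinarith
      rw [abs_le] at h1 ⊢
      constructor <;> linarith [h1.1, h1.2]
    have factor : (μ d : ℝ) * c / N - (μ d : ℝ) / (3 * (d : ℝ) ^ 2)
        = (μ d : ℝ) * ((c - x) / N) := by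
      rw [hx]; field_simp
    calc |(μ d : ℝ) * c / N - (μ d : ℝ) / (3 * (d : ℝ) ^ 2)|
        = |(μ d : ℝ)| * |(c - x) / N| := by rw [factor, abs_mul]
      _ ≤ 1 * |(c - x) / N| := mul_le_mul_of_nonneg_right hmu (abs_nonneg _)
      _ = |c - x| / N := by rw [one_mul, abs_div, abs_of_pos hNpos]
      _ ≤ 3 / N := by gcongr
  · simp only [zero_div, zero_sub, abs_neg, abs_zero]
    positivity

lemma sqrt_tendsto_s9 : Filter.Tendsto (fun N : ℕ => Nat.sqrt N + 1) Filter.atTop Filter.atTop := by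
  apply Filter.tendsto_atTop_atTop.2
  intro b
  refine ⟨b ^ 2, fun a ha => ?_⟩
  have h2 : Nat.sqrt (b ^ 2) ≤ Nat.sqrt a := Nat.sqrt_le_sqrt ha
  rw [Nat.sqrt_eq' b] at h2
  omega

lemma real_sqrt_tendsto : Filter.Tendsto Real.sqrt Filter.atTop Filter.atTop := by
  apply Filter.tendsto_atTop_atTop.2
  intro b
  refine ⟨b ^ 2, fun a ha => ?_⟩
  calc b ≤ |b| := le_abs_self b
    _ = Real.sqrt (b ^ 2) := (Real.sqrt_sq_eq_abs b).symm
    _ ≤ Real.sqrt a := Real.sqrt_le_sqrt ha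

lemma hP : Filter.Tendsto (fun N : ℕ => ∑ d ∈ Finset.Icc 1 (Nat.sqrt N), tR d)
    Filter.atTop (nhds (3 / π ^ 2)) := by
  have hIcc : ∀ K : ℕ, ∑ d ∈ Finset.Icc 1 K, tR d = ∑ d ∈ Finset.range (K + 1), tR d := by
    intro K
    apply Finset.sum_subset
    · intro x hx; rw [Finset.mem_Icc] at hx; rw [Finset.mem_range]; omega
    · intro x hx hnx
      rw [Finset.mem_range] at hx; rw [Finset.mem_Icc] at hnx
      have hx0 : x = 0 := by omega
      subst hx0
      rw [tR, if_neg (by decide)]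
  have := hasSum_tR.tendsto_sum_nat.comp sqrt_tendsto_s9
  apply this.congr
  intro N
  exact (hIcc (Nat.sqrt N)).symm

theorem density_squarefree_coprime_six :
    Filter.Tendsto
      (fun N : ℕ =>
        (((Finset.Icc 1 N).filter (fun n => Squarefree n ∧ Nat.gcd n 6 = 1)).card : ℝ)
          / (N : ℝ))
      Filter.atTop (nhds (3 / Real.pi ^ 2)) := by
  set A : ℕ → ℝ := fun N =>
    (((Finset.Icc 1 N).filter (fun n => Squarefree n ∧ Nat.gcd n 6 = 1)).card : ℝ) / N with hA
  set P : ℕ → ℝ := fun N => ∑ d ∈ Finset.Icc 1 (Nat.sqrt N), tR d with hPdef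
  have hbound : ∀ N : ℕ, ‖A N - P N‖ ≤ 3 * Real.sqrt N / N := by
    intro N
    rcases Nat.eq_zero_or_pos N with rfl | hN
    · simp [hA, hPdef]
    · have hAeq : A N = ∑ d ∈ Finset.Icc 1 (Nat.sqrt N),
          (if Nat.gcd d 6 = 1 then (μ d : ℝ) * (C6 (N / d ^ 2) : ℝ) else 0) / N := by
        rw [hA]; simp only; rw [count_real N, Finset.sum_div]
      rw [hAeq, hPdef]
      simp only
      rw [← Finset.sum_sub_distrib]
      calc ‖∑ d ∈ Finset.Icc 1 (Nat.sqrt N),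
            ((if Nat.gcd d 6 = 1 then (μ d : ℝ) * (C6 (N / d ^ 2) : ℝ) else 0) / N - tR d)‖
          ≤ ∑ d ∈ Finset.Icc 1 (Nat.sqrt N),
            |(if Nat.gcd d 6 = 1 then (μ d : ℝ) * (C6 (N / d ^ 2) : ℝ) else 0) / N - tR d| :=
            Finset.abs_sum_le_sum_abs _ _
        _ ≤ ∑ _d ∈ Finset.Icc 1 (Nat.sqrt N), 3 / (N : ℝ) := by
            apply Finset.sum_le_sum
            intro d hd
            rw [Finset.mem_Icc] at hd
            exact err_bound_s9 hN hd.1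
        _ = (Nat.sqrt N : ℝ) * (3 / N) := by
            rw [Finset.sum_const, Nat.card_Icc]
            simp [nsmul_eq_mul]
        _ ≤ 3 * Real.sqrt N / N := by
            have hle : (Nat.sqrt N : ℝ) ≤ Real.sqrt N := by
              apply Real.le_sqrt_of_sq_le
              exact_mod_cast Nat.sqrt_le' N
            have hN' : (0:ℝ) < N := by exact_mod_cast hN
            calc (Nat.sqrt N : ℝ) * (3 / N) = 3 * (Nat.sqrt N : ℝ) / N := by ring
              _ ≤ 3 * Real.sqrt N / N := by gcongr
  have hg0 : Filter.Tendsto (fun N : ℕ => 3 * Real.sqrt N / N) Filter.atTop (nhds 0) := by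
    have h1 : Filter.Tendsto (fun N : ℕ => (Real.sqrt N)⁻¹) Filter.atTop (nhds 0) :=
      (real_sqrt_tendsto.comp tendsto_natCast_atTop_atTop).inv_tendsto_atTop
    have h2 := h1.const_mul (3 : ℝ)
    rw [mul_zero] at h2
    apply h2.congr'
    filter_upwards [Filter.eventually_ge_atTop 1] with N hN
    have hN' : (0:ℝ) < N := by exact_mod_cast hN
    have hs : (0:ℝ) < Real.sqrt N := Real.sqrt_pos.2 hN'
    rw [eq_div_iff hN'.ne']
    field_simp
    rw [Real.sq_sqrt hN'.le]
  have herr : Filter.Tendsto (fun N : ℕ => A N - P N) Filter.atTop (nhds 0) :=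
    squeeze_zero_norm hbound hg0
  have final := hP.add herr
  rw [add_zero] at final
  apply final.congr
  intro N
  ring
end
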